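/- The combinatorial Springer map for type C is well defined and lands in X_C^{*2}: let λ be a partition of 2n in which every part has even multiplicity, and let χ : ℕ → ℕ satisfy (λ_i − 1)/2 ≤ χ(λ_i) ≤ λ_i, χ(λ_i) ≥ χ(λ_{i+1}), and λ_i − χ(λ_i) ≥ λ_{i+1} − χ(λ_{i+1}) for all i ≥ 1. Define μ_i = χ(λ_{2i−1}) and ν_i = λ_{2i−1} − χ(λ_{2i−1}). Then μ and ν are partitions, |μ| + |ν| = n, and ν_i ≤ μ_i + 1 for all i. -/

import Mathlib

open Finset

/-- A partition: weakly decreasing, finitely supported sequence of naturals (0-indexed). -/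
def IsPartition (μ : ℕ → ℕ) : Prop :=
  Antitone μ ∧ ∃ N, ∀ i, N ≤ i → μ i = 0

/-- Membership in `P_2(n)`: a pair of partitions of total size `n`. -/
def PairP2 (n : ℕ) (p : (ℕ → ℕ) × (ℕ → ℕ)) : Prop :=
  IsPartition p.1 ∧ IsPartition p.2 ∧
    ∃ N, (∀ i, N ≤ i → p.1 i = 0 ∧ p.2 i = 0) ∧
      (∑ i ∈ range N, (p.1 i + p.2 i)) = n

/-- The dominance-type order on pairs of partitions (0-indexed: `p.1 0` is `μ_1`). -/
def PairLE (p q : (ℕ → ℕ) × (ℕ → ℕ)) : Prop :=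
  (∀ j, ∑ i ∈ range j, (p.1 i + p.2 i) ≤ ∑ i ∈ range j, (q.1 i + q.2 i)) ∧
  (∀ j, (∑ i ∈ range j, (p.1 i + p.2 i)) + p.1 j ≤
        (∑ i ∈ range j, (q.1 i + q.2 i)) + q.1 j)

/-- the combinatorial Springer correspondence map for type `C`
is well defined and lands in `X_C^{*2}`. Here `l` is 0-indexed, so `l (2*i)` is
`λ_{2i+1}` (1-indexed `λ_{2i-1}` for `i ≥ 1`). -/
theorem springer_typeC (n N : ℕ) (l χ : ℕ → ℕ)
    (hanti : Antitone l) (hN : ∀ i, N ≤ i → l i = 0)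
    (hsum : ∑ i ∈ range N, l i = 2 * n)
    (hmult : ∀ j, 0 < j → Even (((range N).filter fun i => l i = j).card))
    (hχ1 : ∀ i, l i ≤ 2 * χ (l i) + 1)
    (hχ2 : ∀ i, χ (l i) ≤ l i)
    (hχ3 : ∀ i, χ (l (i + 1)) ≤ χ (l i))
    (hχ4 : ∀ i, l (i + 1) - χ (l (i + 1)) ≤ l i - χ (l i)) :
    Antitone (fun i => χ (l (2 * i))) ∧
    Antitone (fun i => l (2 * i) - χ (l (2 * i))) ∧
    (∀ i, N ≤ i → χ (l (2 * i)) = 0 ∧ l (2 * i) - χ (l (2 * i)) = 0) ∧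
    (∑ i ∈ range N, (χ (l (2 * i)) + (l (2 * i) - χ (l (2 * i))))) = n ∧
    (∀ i, l (2 * i) - χ (l (2 * i)) ≤ χ (l (2 * i)) + 1) := by
  -- χ ∘ l and l - χ∘l are antitone in the index
  have hg : Antitone fun i => χ (l i) := antitone_nat_of_succ_le hχ3
  have hh : Antitone fun i => l i - χ (l i) := antitone_nat_of_succ_le hχ4
  -- evenness of cardinalities of upper level sets
  have key : ∀ d j, 1 ≤ j → l 0 + 1 ≤ j + d →
      Even ((range N).filter (fun i => j ≤ l i)).card := by
    intro d
    induction d with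
    | zero =>
      intro j hj hd
      have : (range N).filter (fun i => j ≤ l i) = ∅ := by
        apply Finset.filter_false_of_mem
        intro i _
        have := hanti (Nat.zero_le i)
        omega
      simp [this]
    | succ d ih =>
      intro j hj hd
      rcases le_or_gt (l 0 + 1) (j + d) with h | h
      · exact ih j hj h
      · have hsplit : (range N).filter (fun i => j ≤ l i) =
            ((range N).filter (fun i => j + 1 ≤ l i)) ∪
            ((range N).filter (fun i => l i = j)) := by
          ext i
          simp only [Finset.mem_union, Finset.mem_filter]
          constructor
          · rintro ⟨hi, hji⟩
            rcases eq_or_lt_of_le hji with he | hl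
            · exact Or.inr ⟨hi, he.symm⟩
            · exact Or.inl ⟨hi, hl⟩
          · rintro (⟨hi, hji⟩ | ⟨hi, hji⟩) <;> exact ⟨hi, by omega⟩
        have hdisj : Disjoint ((range N).filter (fun i => j + 1 ≤ l i))
            ((range N).filter (fun i => l i = j)) := by
          rw [Finset.disjoint_left]
          intro i h1 h2
          simp only [Finset.mem_filter] at h1 h2
          omega
        rw [hsplit, Finset.card_union_of_disjoint hdisj]
        exact Even.add (ih (j + 1) (by omega) (by omega)) (hmult j (by omega))
  -- pairing: l (2i) = l (2i+1)
  have pair : ∀ i, l (2 * i + 1) = l (2 * i) := by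
    intro i
    rcases Nat.eq_zero_or_pos (l (2 * i)) with h0 | hpos
    · have h1 : l (2 * i + 1) ≤ l (2 * i) := hanti (by omega)
      omega
    by_contra hne
    have hlt : l (2 * i + 1) < l (2 * i) :=
      lt_of_le_of_ne (hanti (by omega : 2 * i ≤ 2 * i + 1)) hne
    have hiN : 2 * i < N := by
      by_contra h
      have := hN (2 * i) (by omega)
      omega
    have hfeq : (range N).filter (fun i' => l (2 * i) ≤ l i') = range (2 * i + 1) := by
      ext i'
      simp only [Finset.mem_filter, Finset.mem_range]
      constructor
      · rintro ⟨h1, h2⟩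
        by_contra hcon
        have h3 : l i' ≤ l (2 * i + 1) := hanti (by omega)
        omega
      · intro hlt2
        have h4 : l (2 * i) ≤ l i' := hanti (by omega)
        exact ⟨by omega, h4⟩
    have heven := key (l 0 + 1) (l (2 * i)) hpos (by omega)
    rw [hfeq, Finset.card_range] at heven
    rw [Nat.even_iff] at heven
    omega
  have hχ0 : χ 0 = 0 := by
    have h1 := hχ2 N
    have h2 := hN N le_rfl
    rw [h2] at h1
    omega
  refine ⟨fun i j hij => hg (by omega), fun i j hij => hh (by omega), ?_, ?_, ?_⟩
  · intro i hi
    have : l (2 * i) = 0 := hN (2 * i) (by omega)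
    rw [this, hχ0]
    simp
  · -- the sum
    have hterm : ∀ i, χ (l (2 * i)) + (l (2 * i) - χ (l (2 * i))) = l (2 * i) := by
      intro i
      have := hχ2 (2 * i)
      omega
    have hdouble : ∀ M : ℕ, ∑ i ∈ range (2 * M), l i = ∑ i ∈ range M, (l (2 * i) + l (2 * i + 1)) := by
      intro M
      induction M with
      | zero => simp
      | succ M ih =>
        have : 2 * (M + 1) = 2 * M + 1 + 1 := by omega
        rw [this, Finset.sum_range_succ, Finset.sum_range_succ, Finset.sum_range_succ, ih]
        omega
    have hext : ∑ i ∈ range (2 * N), l i = 2 * n := by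
      rw [← hsum]
      exact (Finset.sum_subset (Finset.range_subset_range.2 (by omega)) fun x _ hx =>
        hN x (by simpa using hx)).symm
    have : ∑ i ∈ range N, (l (2 * i) + l (2 * i + 1)) = 2 * n := by
      rw [← hdouble, hext]
    have h2 : ∑ i ∈ range N, (l (2 * i) + l (2 * i + 1)) = 2 * ∑ i ∈ range N, l (2 * i) := by
      rw [Finset.mul_sum]
      apply Finset.sum_congr rfl
      intro i _
      rw [pair i]
      ring
    calc (∑ i ∈ range N, (χ (l (2 * i)) + (l (2 * i) - χ (l (2 * i)))))
        = ∑ i ∈ range N, l (2 * i) := Finset.sum_congr rfl (fun i _ => hterm i)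
      _ = n := by omega
  · intro i
    have := hχ1 (2 * i)
    omega
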